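/- Let d ≥ 1 and let μ, ν₁, …, ν_N be Borel probability measures on ℝ^d with finite second moments, α₁, …, α_N ≥ 0 with Σᵢ αᵢ = 1, and τ > 0. For each i, let γᵢ be a coupling attaining the infimum defining W²_{2,ub}(μ, νᵢ), with disintegration γᵢ = μ ⊗ γ_{i,x}, conditional means Tᵢ(x) = ∫ y dγ_{i,x}(y), and T̄(x) = Σᵢ αᵢ Tᵢ(x). Then, with V(ρ) = Σᵢ αᵢ W²_{2,ub}(ρ, νᵢ), one has V(μ) = V(T̄_#μ) if and only if T̄(x) = x for μ-almost every x. -/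

import Mathlib

open MeasureTheory ENNReal

noncomputable section

/-- Euclidean space ℝ^d. -/
abbrev Ed (d : ℕ) := EuclideanSpace ℝ (Fin d)

/-- The entropy function ψ(t) = t log t − t + 1 (equal to 1 at t = 0 since log 0 = 0). -/
def entropyPsi (t : ℝ) : ℝ := t * Real.log t - t + 1

open Classical in
/-- The Csiszár divergence D_ψ(ρ‖ν) for the entropy function ψ. -/
def Dpsi {d : ℕ} (ρ ν : Measure (Ed d)) : ℝ≥0∞ :=
  if ρ ≪ ν then ∫⁻ y, ENNReal.ofReal (entropyPsi ((ρ.rnDeriv ν) y).toReal) ∂ν else ⊤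

/-- Squared unbalanced Wasserstein cost W²_{2,ub,τ}(μ,ν). -/
def UOTcost {d : ℕ} (τ : ℝ) (μ ν : Measure (Ed d)) : ℝ≥0∞ :=
  ⨅ (π : Measure (Ed d × Ed d)) (_ : π.map Prod.fst = μ),
    (∫⁻ p, ENNReal.ofReal (‖p.1 - p.2‖ ^ 2 / 2) ∂π)
      + ENNReal.ofReal τ * Dpsi (π.map Prod.snd) ν

/-- γ is an optimal coupling for the unbalanced problem W²_{2,ub,τ}(μ,ν). -/
def IsOptimalCoupling {d : ℕ} (τ : ℝ) (μ ν : Measure (Ed d))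
    (γ : Measure (Ed d × Ed d)) : Prop :=
  γ.map Prod.fst = μ ∧
    (∫⁻ p, ENNReal.ofReal (‖p.1 - p.2‖ ^ 2 / 2) ∂γ)
      + ENNReal.ofReal τ * Dpsi (γ.map Prod.snd) ν = UOTcost τ μ ν

/-- The Fréchet objective V(ρ) = Σᵢ αᵢ W²_{2,ub,τ}(ρ, νᵢ). -/
def Vfun {d : ℕ} (τ : ℝ) {N : ℕ} (α : Fin N → ℝ) (ν : Fin N → Measure (Ed d))
    (ρ : Measure (Ed d)) : ℝ≥0∞ :=
  ∑ i, ENNReal.ofReal (α i) * UOTcost τ ρ (ν i)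

/-! ### Auxiliary lemmas -/

set_option linter.unusedSectionVars false

lemma sq_int_le {α : Type*} [MeasurableSpace α] (m : Measure α)
    [IsProbabilityMeasure m] {f : α → ℝ} (hf : Integrable f m)
    (hf2 : Integrable (fun x => f x ^ 2) m) :
    (∫ x, f x ∂m) ^ 2 ≤ ∫ x, f x ^ 2 ∂m := by
  set c := ∫ x, f x ∂m with hc
  have h0 : 0 ≤ ∫ x, (f x - c) ^ 2 ∂m := integral_nonneg fun x => sq_nonneg _
  have hexp : (fun x => (f x - c) ^ 2) = fun x => (f x ^ 2 - (2*c) * f x) + c^2 := by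
    funext x; ring
  have hsub : Integrable (fun x => f x ^ 2 - (2*c) * f x) m := hf2.sub (hf.const_mul (2*c))
  rw [hexp] at h0
  rw [integral_add hsub (integrable_const _),
    integral_sub hf2 (hf.const_mul (2*c)), MeasureTheory.integral_const_mul, integral_const,
    probReal_univ] at h0
  simp only [ENNReal.toReal_one, smul_eq_mul, one_mul, ← hc] at h0
  nlinarith [h0]

lemma Dpsi_self {d : ℕ} (ν : Measure (Ed d)) [SigmaFinite ν] : Dpsi ν ν = 0 := by
  rw [Dpsi, if_pos Measure.AbsolutelyContinuous.rfl]
  have h : ∀ᵐ y ∂ν, ENNReal.ofReal (entropyPsi ((ν.rnDeriv ν) y).toReal) = 0 := by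
    filter_upwards [Measure.rnDeriv_self ν] with y hy
    simp [hy, entropyPsi]
  rw [lintegral_congr_ae h, lintegral_zero]

lemma cost_integrable_prod {d : ℕ} (μ ν : Measure (Ed d)) [IsProbabilityMeasure μ]
    [IsProbabilityMeasure ν] (hμ : Integrable (fun x => ‖x‖ ^ 2) μ)
    (hν : Integrable (fun x => ‖x‖ ^ 2) ν) :
    Integrable (fun p : Ed d × Ed d => ‖p.1 - p.2‖ ^ 2 / 2) (μ.prod ν) := by
  have h1 : Integrable (fun p : Ed d × Ed d => ‖p.1‖ ^ 2) (μ.prod ν) := by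
    have := (integrable_map_measure (μ := μ.prod ν) (f := Prod.fst)
      (g := fun x : Ed d => ‖x‖^2)
      (continuous_norm.pow 2).aestronglyMeasurable measurable_fst.aemeasurable).mp
    rw [show (Measure.map Prod.fst (μ.prod ν)) = μ by simp [Measure.map_fst_prod]] at this
    exact this hμ
  have h2 : Integrable (fun p : Ed d × Ed d => ‖p.2‖ ^ 2) (μ.prod ν) := by
    have := (integrable_map_measure (μ := μ.prod ν) (f := Prod.snd)
      (g := fun x : Ed d => ‖x‖^2)
      (continuous_norm.pow 2).aestronglyMeasurable measurable_snd.aemeasurable).mp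
    rw [show (Measure.map Prod.snd (μ.prod ν)) = ν by simp [Measure.map_snd_prod]] at this
    exact this hν
  refine (h1.add h2).mono
    (((((continuous_fst.sub continuous_snd).norm.pow 2).div_const 2)).aestronglyMeasurable) ?_
  filter_upwards with p
  have h3 : ‖p.1 - p.2‖ ≤ ‖p.1‖ + ‖p.2‖ := norm_sub_le _ _
  have h4 : (0:ℝ) ≤ ‖p.1 - p.2‖ := norm_nonneg _
  simp only [Pi.add_apply, Real.norm_eq_abs]
  rw [abs_of_nonneg (by positivity : (0:ℝ) ≤ ‖p.1 - p.2‖^2/2),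
    abs_of_nonneg (by positivity : (0:ℝ) ≤ ‖p.1‖^2 + ‖p.2‖^2)]
  nlinarith [norm_nonneg p.1, norm_nonneg p.2, sq_nonneg (‖p.1‖ - ‖p.2‖),
    mul_self_le_mul_self h4 h3]

lemma UOTcost_ne_top {d : ℕ} (τ : ℝ) (μ ν : Measure (Ed d)) [IsProbabilityMeasure μ]
    [IsProbabilityMeasure ν] (hμ : Integrable (fun x => ‖x‖ ^ 2) μ)
    (hν : Integrable (fun x => ‖x‖ ^ 2) ν) : UOTcost τ μ ν ≠ ⊤ := by
  have hmapfst : (μ.prod ν).map Prod.fst = μ := by simp [Measure.map_fst_prod]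
  have hmapsnd : (μ.prod ν).map Prod.snd = ν := by simp [Measure.map_snd_prod]
  have hle : UOTcost τ μ ν ≤
      (∫⁻ p, ENNReal.ofReal (‖p.1 - p.2‖ ^ 2 / 2) ∂(μ.prod ν))
        + ENNReal.ofReal τ * Dpsi ((μ.prod ν).map Prod.snd) ν :=
    iInf₂_le (μ.prod ν) hmapfst
  rw [hmapsnd, Dpsi_self, mul_zero, add_zero] at hle
  have hint := cost_integrable_prod μ ν hμ hν
  rw [← ofReal_integral_eq_lintegral_ofReal hint
    (Filter.Eventually.of_forall fun p => by positivity)] at hle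
  exact ne_top_of_le_ne_top ENNReal.ofReal_ne_top hle

section PerCoupling
variable {d : ℕ} {μ : Measure (Ed d)} [IsProbabilityMeasure μ]
  {γ : Measure (Ed d × Ed d)} [IsFiniteMeasure γ]

lemma T_sm : StronglyMeasurable (fun x => ∫ y, y ∂γ.condKernel x) :=
  StronglyMeasurable.integral_kernel_prod_right' (f := fun p : Ed d × Ed d => p.2)
    measurable_snd.stronglyMeasurable

lemma marg_fst (hfst : γ.map Prod.fst = μ) {E : Type*} [NormedAddCommGroup E]
    [NormedSpace ℝ E] {h : Ed d → E} (hm : AEStronglyMeasurable h μ) :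
    ∫ p, h p.1 ∂γ = ∫ x, h x ∂μ := by
  rw [← hfst, integral_map measurable_fst.aemeasurable (by rwa [hfst])]

lemma int_comp_fst (hfst : γ.map Prod.fst = μ) {E : Type*} [NormedAddCommGroup E]
    {h : Ed d → E} (hm : AEStronglyMeasurable h μ) (hi : Integrable h μ) :
    Integrable (fun p : Ed d × Ed d => h p.1) γ := by
  have := (integrable_map_measure (μ := γ) (f := Prod.fst) (g := h)
    (by rwa [hfst]) measurable_fst.aemeasurable).mp
  rw [hfst] at this
  exact this hi

lemma int_cost (hC : ∫⁻ p, ENNReal.ofReal (‖p.1 - p.2‖ ^ 2 / 2) ∂γ ≠ ⊤) :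
    Integrable (fun p : Ed d × Ed d => ‖p.1 - p.2‖ ^ 2 / 2) γ := by
  refine ⟨(((continuous_fst.sub continuous_snd).norm.pow 2).div_const 2).aestronglyMeasurable, ?_⟩
  rw [hasFiniteIntegral_iff_ofReal (Filter.Eventually.of_forall fun p => by positivity)]
  exact lt_top_iff_ne_top.mpr hC

lemma int_x2 (hfst : γ.map Prod.fst = μ) (hμ : Integrable (fun x => ‖x‖ ^ 2) μ) :
    Integrable (fun p : Ed d × Ed d => ‖p.1‖ ^ 2) γ :=
  int_comp_fst hfst (continuous_norm.pow 2).aestronglyMeasurable hμ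

lemma int_y2 (hfst : γ.map Prod.fst = μ) (hμ : Integrable (fun x => ‖x‖ ^ 2) μ)
    (hC : ∫⁻ p, ENNReal.ofReal (‖p.1 - p.2‖ ^ 2 / 2) ∂γ ≠ ⊤) :
    Integrable (fun p : Ed d × Ed d => ‖p.2‖ ^ 2) γ := by
  have h1 := (int_cost hC).const_mul 4
  have h2 := (int_x2 hfst hμ).const_mul 2
  refine (h1.add h2).mono ((continuous_snd.norm.pow 2).aestronglyMeasurable) ?_
  filter_upwards with p
  have h3 : ‖p.2‖ ≤ ‖p.1 - p.2‖ + ‖p.1‖ := by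
    have := norm_sub_le (p.1 - p.2) p.1
    simpa [sub_sub_cancel_left, norm_neg] using this
  have h4 : (0:ℝ) ≤ ‖p.2‖ := norm_nonneg _
  simp only [Pi.add_apply, Real.norm_eq_abs]
  rw [abs_of_nonneg (by positivity : (0:ℝ) ≤ ‖p.2‖^2)]
  have hb : ‖p.2‖^2 ≤ 2*‖p.1-p.2‖^2 + 2*‖p.1‖^2 := by
    nlinarith [norm_nonneg (p.1-p.2), norm_nonneg p.1, mul_self_le_mul_self h4 h3,
      sq_nonneg (‖p.1-p.2‖ - ‖p.1‖)]
  calc ‖p.2‖^2 ≤ 2*‖p.1-p.2‖^2 + 2*‖p.1‖^2 := hb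
    _ ≤ |4 * (‖p.1-p.2‖^2/2) + 2 * ‖p.1‖^2| := by
        rw [abs_of_nonneg (by positivity)]; ring_nf; linarith [sq_nonneg ‖p.1-p.2‖]

lemma int_y (h2 : Integrable (fun p : Ed d × Ed d => ‖p.2‖ ^ 2) γ) :
    Integrable (fun p : Ed d × Ed d => p.2) γ := by
  refine ((integrable_const (1:ℝ)).add h2).mono
    continuous_snd.aestronglyMeasurable ?_
  filter_upwards with p
  simp only [Pi.add_apply, Real.norm_eq_abs]
  rw [abs_of_nonneg (by positivity : (0:ℝ) ≤ 1 + ‖p.2‖^2)]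
  nlinarith [norm_nonneg p.2, sq_nonneg (‖p.2‖ - 1)]

lemma int_T2 (hfst : γ.map Prod.fst = μ)
    (hy2 : Integrable (fun p : Ed d × Ed d => ‖p.2‖ ^ 2) γ)
    (hy : Integrable (fun p : Ed d × Ed d => p.2) γ) :
    Integrable (fun x => ‖∫ y, y ∂γ.condKernel x‖ ^ 2) μ := by
  have hfst' : γ.fst = μ := hfst
  rw [← hfst']
  have h2 := hy2.integral_condKernel
  refine h2.mono ((T_sm.measurable.norm.pow_const 2).aestronglyMeasurable) ?_
  filter_upwards [hy.condKernel_ae, hy2.condKernel_ae] with x h1 h2x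
  have hn : ‖∫ y, y ∂γ.condKernel x‖ ≤ ∫ y, ‖y‖ ∂γ.condKernel x :=
    norm_integral_le_integral_norm _
  have hcs : (∫ y, ‖y‖ ∂γ.condKernel x) ^ 2 ≤ ∫ y, ‖y‖ ^ 2 ∂γ.condKernel x :=
    sq_int_le _ h1.norm h2x
  have hnn : (0:ℝ) ≤ ∫ y, ‖y‖ ^ 2 ∂γ.condKernel x := integral_nonneg fun y => sq_nonneg _
  rw [Real.norm_eq_abs, Real.norm_eq_abs, abs_of_nonneg (by positivity), abs_of_nonneg hnn]
  calc ‖∫ y, y ∂γ.condKernel x‖ ^ 2 ≤ (∫ y, ‖y‖ ∂γ.condKernel x) ^ 2 :=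
        pow_le_pow_left₀ (norm_nonneg _) hn 2
    _ ≤ _ := hcs

lemma inner_identity (hfst : γ.map Prod.fst = μ) {g : Ed d → Ed d} (hgm : Measurable g)
    (hg2 : Integrable (fun x => ‖g x‖ ^ 2) μ)
    (hy2 : Integrable (fun p : Ed d × Ed d => ‖p.2‖ ^ 2) γ)
    (hy : Integrable (fun p : Ed d × Ed d => p.2) γ) :
    ∫ p, (inner ℝ (g p.1) p.2 : ℝ) ∂γ
      = ∫ x, (inner ℝ (g x) (∫ y, y ∂γ.condKernel x) : ℝ) ∂μ := by
  have hfst' : γ.fst = μ := hfst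
  have hgx2γ : Integrable (fun p : Ed d × Ed d => ‖g p.1‖ ^ 2) γ :=
    int_comp_fst hfst ((hgm.norm.pow_const 2).aestronglyMeasurable) hg2
  have hF : Integrable (fun p : Ed d × Ed d => (inner ℝ (g p.1) p.2 : ℝ)) γ := by
    refine (hgx2γ.add hy2).mono
      (((hgm.comp measurable_fst).inner measurable_snd).aestronglyMeasurable) ?_
    filter_upwards with p
    simp only [Pi.add_apply, Real.norm_eq_abs]
    rw [abs_of_nonneg (by positivity : (0:ℝ) ≤ ‖g p.1‖^2 + ‖p.2‖^2)]
    have h5 := abs_real_inner_le_norm (g p.1) p.2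
    have h6 : ‖g p.1‖ * ‖p.2‖ ≤ ‖g p.1‖^2 + ‖p.2‖^2 := by
      nlinarith [norm_nonneg (g p.1), norm_nonneg p.2, sq_nonneg (‖g p.1‖ - ‖p.2‖)]
    exact le_trans h5 h6
  rw [← Measure.integral_condKernel (ρ := γ) hF, hfst']
  apply integral_congr_ae
  have hyae : ∀ᵐ x ∂μ, Integrable (fun y : Ed d => y) (γ.condKernel x) := by
    rw [← hfst']; exact hy.condKernel_ae
  filter_upwards [hyae] with x h1
  exact integral_inner h1 (g x)

/-- An integrable bound for an inner product against an L² pair of functions. -/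
lemma int_inner_of_sq {α : Type*} [MeasurableSpace α] {m : Measure α}
    {u v : α → Ed d} (hum : AEStronglyMeasurable u m) (hvm : AEStronglyMeasurable v m)
    (hu : Integrable (fun x => ‖u x‖ ^ 2) m) (hv : Integrable (fun x => ‖v x‖ ^ 2) m) :
    Integrable (fun x => (inner ℝ (u x) (v x) : ℝ)) m := by
  refine (hu.add hv).mono (hum.inner hvm) ?_
  filter_upwards with x
  simp only [Pi.add_apply, Real.norm_eq_abs]
  rw [abs_of_nonneg (by positivity : (0:ℝ) ≤ ‖u x‖^2 + ‖v x‖^2)]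
  have h5 := abs_real_inner_le_norm (u x) (v x)
  have h6 : ‖u x‖ * ‖v x‖ ≤ ‖u x‖^2 + ‖v x‖^2 := by
    nlinarith [norm_nonneg (u x), norm_nonneg (v x), sq_nonneg (‖u x‖ - ‖v x‖)]
  exact le_trans h5 h6

end PerCoupling

theorem objective_eq_iff_averageMap_fixed
    {d N : ℕ} (hd : 1 ≤ d) (τ : ℝ) (hτ : 0 < τ)
    (μ : Measure (Ed d)) [IsProbabilityMeasure μ]
    (hμ : Integrable (fun x => ‖x‖ ^ 2) μ)
    (ν : Fin N → Measure (Ed d)) [∀ i, IsProbabilityMeasure (ν i)]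
    (hν : ∀ i, Integrable (fun x => ‖x‖ ^ 2) (ν i))
    (α : Fin N → ℝ) (hα : ∀ i, 0 ≤ α i) (hαsum : ∑ i, α i = 1)
    (γ : Fin N → Measure (Ed d × Ed d)) [∀ i, IsFiniteMeasure (γ i)]
    (hγ : ∀ i, IsOptimalCoupling τ μ (ν i) (γ i))
    (T : Fin N → Ed d → Ed d)
    (hT : ∀ i x, T i x = ∫ y, y ∂((γ i).condKernel x))
    (Tbar : Ed d → Ed d)
    (hTbar : ∀ x, Tbar x = ∑ i, α i • T i x) :
    Vfun τ α ν μ = Vfun τ α ν (μ.map Tbar) ↔ ∀ᵐ x ∂μ, Tbar x = x := by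
  have hfst : ∀ i, (γ i).map Prod.fst = μ := fun i => (hγ i).1
  constructor
  · intro h
    -- finiteness of the optimal values
    have hUne : ∀ i, UOTcost τ μ (ν i) ≠ ⊤ := fun i => UOTcost_ne_top τ μ (ν i) hμ (hν i)
    have hCne : ∀ i, (∫⁻ p, ENNReal.ofReal (‖p.1 - p.2‖ ^ 2 / 2) ∂(γ i)) ≠ ⊤ := by
      intro i
      have hne := hUne i
      rw [← (hγ i).2] at hne
      exact (ENNReal.add_ne_top.mp hne).1
    -- integrability on the couplings
    have hcost : ∀ i, Integrable (fun p : Ed d × Ed d => ‖p.1 - p.2‖ ^ 2 / 2) (γ i) :=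
      fun i => int_cost (hCne i)
    have hy2 : ∀ i, Integrable (fun p : Ed d × Ed d => ‖p.2‖ ^ 2) (γ i) :=
      fun i => int_y2 (hfst i) hμ (hCne i)
    have hy : ∀ i, Integrable (fun p : Ed d × Ed d => p.2) (γ i) := fun i => int_y (hy2 i)
    -- the barycentric maps
    have hTe : ∀ i, T i = fun x => ∫ y, y ∂((γ i).condKernel x) := fun i => funext (hT i)
    have hTsm : ∀ i, StronglyMeasurable (T i) := fun i => by
      rw [hTe i]; exact T_sm
    have hT2 : ∀ i, Integrable (fun x => ‖T i x‖ ^ 2) μ := fun i => by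
      simp only [hTe i]; exact int_T2 (hfst i) (hy2 i) (hy i)
    have hTbarm : Measurable Tbar := by
      have he : Tbar = fun x => ∑ i, α i • T i x := funext hTbar
      rw [he]
      exact Finset.measurable_sum _ fun i _ => ((hTsm i).measurable.const_smul (α i))
    have hTbar2 : Integrable (fun x => ‖Tbar x‖ ^ 2) μ := by
      have hdom : Integrable (fun x => (N:ℝ) * ∑ i, (α i)^2 * ‖T i x‖^2) μ :=
        (integrable_finset_sum _ fun i _ => (hT2 i).const_mul _).const_mul _
      refine hdom.mono ((hTbarm.norm.pow_const 2).aestronglyMeasurable) ?_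
      filter_upwards with x
      simp only [Real.norm_eq_abs]
      rw [abs_of_nonneg (by positivity : (0:ℝ) ≤ ‖Tbar x‖^2)]
      have h1 : ‖Tbar x‖ ≤ ∑ i, α i * ‖T i x‖ := by
        rw [hTbar x]
        refine (norm_sum_le _ _).trans ?_
        refine Finset.sum_le_sum fun i _ => ?_
        rw [norm_smul, Real.norm_eq_abs, abs_of_nonneg (hα i)]
      have h2 : (∑ i, α i * ‖T i x‖)^2
          ≤ ((Finset.univ : Finset (Fin N)).card : ℝ) * ∑ i, (α i * ‖T i x‖)^2 :=
        sq_sum_le_card_mul_sum_sq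
      have h3 : ‖Tbar x‖^2 ≤ (∑ i, α i * ‖T i x‖)^2 :=
        pow_le_pow_left₀ (norm_nonneg _) h1 2
      have hcard : (((Finset.univ : Finset (Fin N)).card : ℝ)) = (N:ℝ) := by simp
      calc ‖Tbar x‖^2 ≤ (N:ℝ) * ∑ i, (α i * ‖T i x‖)^2 := by
            rw [← hcard]; exact h3.trans h2
        _ = (N:ℝ) * ∑ i, (α i)^2 * ‖T i x‖^2 := by
            congr 1; exact Finset.sum_congr rfl fun i _ => by ring
        _ ≤ |(N:ℝ) * ∑ i, (α i)^2 * ‖T i x‖^2| := le_abs_self _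
    -- the displacement map g
    set g : Ed d → Ed d := fun x => Tbar x - x with hg
    have hgm : Measurable g := hTbarm.sub measurable_id
    have hg2 : Integrable (fun x => ‖g x‖ ^ 2) μ := by
      have hdom : Integrable (fun x => 2*‖Tbar x‖^2 + 2*‖x‖^2) μ :=
        (hTbar2.const_mul 2).add (hμ.const_mul 2)
      refine hdom.mono ((hgm.norm.pow_const 2).aestronglyMeasurable) ?_
      filter_upwards with x
      simp only [Real.norm_eq_abs]
      rw [abs_of_nonneg (by positivity : (0:ℝ) ≤ ‖g x‖^2),
        abs_of_nonneg (by positivity : (0:ℝ) ≤ 2*‖Tbar x‖^2 + 2*‖x‖^2)]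
      have h3 : ‖g x‖ ≤ ‖Tbar x‖ + ‖x‖ := norm_sub_le _ _
      nlinarith [norm_nonneg (g x), norm_nonneg (Tbar x), norm_nonneg x,
        mul_self_le_mul_self (norm_nonneg (g x)) h3, sq_nonneg (‖Tbar x‖ - ‖x‖)]
    -- real quantities
    set c : Fin N → ℝ := fun i => ∫ p, ‖p.1 - p.2‖^2/2 ∂(γ i) with hcdef
    set c' : Fin N → ℝ := fun i => ∫ p, ‖Tbar p.1 - p.2‖^2/2 ∂(γ i) with hc'def
    set I : ℝ := ∫ x, ‖g x‖^2 ∂μ with hIdef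
    set X : ℝ := ∫ x, (inner ℝ (g x) x : ℝ) ∂μ with hXdef
    -- more integrability
    have hgx2γ : ∀ i, Integrable (fun p : Ed d × Ed d => ‖g p.1‖^2) (γ i) :=
      fun i => int_comp_fst (hfst i) ((hgm.norm.pow_const 2).aestronglyMeasurable) hg2
    have hx2γ : ∀ i, Integrable (fun p : Ed d × Ed d => ‖p.1‖^2) (γ i) :=
      fun i => int_x2 (hfst i) hμ
    have hsubγ : ∀ i, Integrable (fun p : Ed d × Ed d => ‖p.1 - p.2‖^2) (γ i) := fun i =>
      ((hcost i).const_mul 2).congr (Filter.Eventually.of_forall fun p => by ring)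
    have hA2 : ∀ i, Integrable (fun p : Ed d × Ed d => (inner ℝ (g p.1) (p.1 - p.2) : ℝ)) (γ i) :=
      fun i => int_inner_of_sq ((hgm.comp measurable_fst).aestronglyMeasurable)
        ((measurable_fst.sub measurable_snd).aestronglyMeasurable) (hgx2γ i) (hsubγ i)
    have hB1 : ∀ i, Integrable (fun p : Ed d × Ed d => (inner ℝ (g p.1) p.1 : ℝ)) (γ i) :=
      fun i => int_inner_of_sq ((hgm.comp measurable_fst).aestronglyMeasurable)
        (measurable_fst.aestronglyMeasurable) (hgx2γ i) (hx2γ i)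
    have hB2 : ∀ i, Integrable (fun p : Ed d × Ed d => (inner ℝ (g p.1) p.2 : ℝ)) (γ i) :=
      fun i => int_inner_of_sq ((hgm.comp measurable_fst).aestronglyMeasurable)
        (measurable_snd.aestronglyMeasurable) (hgx2γ i) (hy2 i)
    have hBμ : ∀ i, Integrable (fun x => (inner ℝ (g x) (T i x) : ℝ)) μ :=
      fun i => int_inner_of_sq hgm.aestronglyMeasurable
        (hTsm i).aestronglyMeasurable hg2 (hT2 i)
    have hBx : Integrable (fun x => (inner ℝ (g x) x : ℝ)) μ :=
      int_inner_of_sq hgm.aestronglyMeasurable measurable_id.aestronglyMeasurable hg2 hμ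
    have hBT : Integrable (fun x => (inner ℝ (g x) (Tbar x) : ℝ)) μ :=
      int_inner_of_sq hgm.aestronglyMeasurable hTbarm.aestronglyMeasurable hg2 hTbar2
    -- pointwise expansion of the transported cost
    have hpt : ∀ (p : Ed d × Ed d), ‖Tbar p.1 - p.2‖^2/2
        = ‖p.1 - p.2‖^2/2 + (inner ℝ (g p.1) (p.1 - p.2) : ℝ) + ‖g p.1‖^2/2 := by
      intro p
      have hsum : g p.1 + (p.1 - p.2) = Tbar p.1 - p.2 := by
        simp only [hg]; abel
      have hexp := norm_add_sq_real (g p.1) (p.1 - p.2)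
      rw [hsum] at hexp
      linarith [hexp]
    -- value of the transported cost
    have hc'eq : ∀ i, c' i = c i + (∫ p, (inner ℝ (g p.1) (p.1 - p.2) : ℝ) ∂(γ i)) + I/2 := by
      intro i
      have h1 : c' i = ∫ p, (‖p.1 - p.2‖^2/2 + (inner ℝ (g p.1) (p.1 - p.2) : ℝ)
          + ‖g p.1‖^2/2) ∂(γ i) := by
        rw [hc'def]
        exact integral_congr_ae (Filter.Eventually.of_forall fun p => hpt p)
      have hi12 : Integrable (fun p : Ed d × Ed d =>
          ‖p.1 - p.2‖^2/2 + (inner ℝ (g p.1) (p.1 - p.2) : ℝ)) (γ i) := (hcost i).add (hA2 i)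
      have hi3 : Integrable (fun p : Ed d × Ed d => ‖g p.1‖^2/2) (γ i) :=
        (hgx2γ i).div_const 2
      rw [h1, integral_add hi12 hi3, integral_add (hcost i) (hA2 i)]
      congr 1
      have h2 : ∫ p, ‖g p.1‖^2/2 ∂(γ i) = ∫ x, ‖g x‖^2/2 ∂μ :=
        marg_fst (hfst i) (((hgm.norm.pow_const 2).div_const 2).aestronglyMeasurable)
      rw [h2, hIdef, ← integral_div]
    -- evaluation of the cross term
    have hA2eq : ∀ i, (∫ p, (inner ℝ (g p.1) (p.1 - p.2) : ℝ) ∂(γ i))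
        = X - ∫ x, (inner ℝ (g x) (T i x) : ℝ) ∂μ := by
      intro i
      have hsplit : (∫ p, (inner ℝ (g p.1) (p.1 - p.2) : ℝ) ∂(γ i))
          = (∫ p, (inner ℝ (g p.1) p.1 : ℝ) ∂(γ i)) - ∫ p, (inner ℝ (g p.1) p.2 : ℝ) ∂(γ i) := by
        rw [← integral_sub (hB1 i) (hB2 i)]
        exact integral_congr_ae (Filter.Eventually.of_forall fun p =>
          inner_sub_right _ _ _)
      rw [hsplit]
      congr 1
      · exact marg_fst (hfst i) ((hgm.inner measurable_id).aestronglyMeasurable)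
      · simp only [hTe i]
        exact inner_identity (hfst i) hgm hg2 (hy2 i) (hy i)
    -- weighted sum of the conditional-mean inner products
    have hsum_inner : ∑ i, α i * ∫ x, (inner ℝ (g x) (T i x) : ℝ) ∂μ
        = ∫ x, (inner ℝ (g x) (Tbar x) : ℝ) ∂μ := by
      have h1 : ∀ i, α i * ∫ x, (inner ℝ (g x) (T i x) : ℝ) ∂μ
          = ∫ x, (inner ℝ (g x) (α i • T i x) : ℝ) ∂μ := by
        intro i
        rw [← MeasureTheory.integral_const_mul]
        exact integral_congr_ae (Filter.Eventually.of_forall fun x =>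
          (real_inner_smul_right _ _ _).symm)
      have h2 : ∀ i, Integrable (fun x => (inner ℝ (g x) (α i • T i x) : ℝ)) μ := by
        intro i
        refine int_inner_of_sq hgm.aestronglyMeasurable
          (((hTsm i).measurable.const_smul (α i)).aestronglyMeasurable) hg2 ?_
        refine ((hT2 i).const_mul ((α i)^2)).congr
          (Filter.Eventually.of_forall fun x => ?_)
        show (α i)^2 * ‖T i x‖^2 = ‖α i • T i x‖^2
        rw [norm_smul, mul_pow, Real.norm_eq_abs, sq_abs]
      rw [Finset.sum_congr rfl fun i _ => h1 i, ← integral_finset_sum _ fun i _ => h2 i]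
      refine integral_congr_ae (Filter.Eventually.of_forall fun x => ?_)
      show ∑ i, (inner ℝ (g x) (α i • T i x) : ℝ) = (inner ℝ (g x) (Tbar x) : ℝ)
      rw [← inner_sum, ← hTbar x]
    -- the crucial real identity
    have hXT : X - (∫ x, (inner ℝ (g x) (Tbar x) : ℝ) ∂μ) = -I := by
      rw [hXdef, ← integral_sub hBx hBT, hIdef, ← integral_neg]
      refine integral_congr_ae (Filter.Eventually.of_forall fun x => ?_)
      show (inner ℝ (g x) x : ℝ) - (inner ℝ (g x) (Tbar x) : ℝ) = -‖g x‖^2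
      have e1 : (inner ℝ (g x) (x - Tbar x) : ℝ)
          = (inner ℝ (g x) x : ℝ) - (inner ℝ (g x) (Tbar x) : ℝ) := inner_sub_right _ _ _
      have e2 : x - Tbar x = -(g x) := by simp only [hg]; abel
      rw [← e1, e2, show (inner ℝ (g x) (-(g x)) : ℝ) = - (inner ℝ (g x) (g x) : ℝ) from
        inner_neg_right _ _, real_inner_self_eq_norm_sq]
    have hkey : ∑ i, α i * c' i + I/2 = ∑ i, α i * c i := by
      have e1 : ∀ i, α i * c' i = α i * c i + α i * X
          - α i * (∫ x, (inner ℝ (g x) (T i x) : ℝ) ∂μ) + α i * (I/2) := by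
        intro i; rw [hc'eq i, hA2eq i]; ring
      rw [Finset.sum_congr rfl fun i _ => e1 i]
      rw [Finset.sum_add_distrib, Finset.sum_sub_distrib, Finset.sum_add_distrib,
        ← Finset.sum_mul, ← Finset.sum_mul, hsum_inner, hαsum]
      linarith [hXT]
    -- nonnegativity
    have hc0 : ∀ i, 0 ≤ c i := fun i => integral_nonneg fun p => by positivity
    have hc'0 : ∀ i, 0 ≤ c' i := fun i => integral_nonneg fun p => by positivity
    have hI0 : 0 ≤ I := integral_nonneg fun x => sq_nonneg _
    -- ENNReal versions of the costs
    have hCi : ∀ i, (∫⁻ p, ENNReal.ofReal (‖p.1 - p.2‖ ^ 2 / 2) ∂(γ i))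
        = ENNReal.ofReal (c i) := fun i =>
      (ofReal_integral_eq_lintegral_ofReal (hcost i)
        (Filter.Eventually.of_forall fun p => by positivity)).symm
    have hcost' : ∀ i, Integrable (fun p : Ed d × Ed d => ‖Tbar p.1 - p.2‖^2/2) (γ i) :=
      fun i => (((hcost i).add (hA2 i)).add ((hgx2γ i).div_const 2)).congr
        (Filter.Eventually.of_forall fun p => (hpt p).symm)
    have hCi' : ∀ i, (∫⁻ p, ENNReal.ofReal (‖Tbar p.1 - p.2‖ ^ 2 / 2) ∂(γ i))
        = ENNReal.ofReal (c' i) := fun i =>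
      (ofReal_integral_eq_lintegral_ofReal (hcost' i)
        (Filter.Eventually.of_forall fun p => by positivity)).symm
    -- upper bound for the transported problem
    have hub : ∀ i, UOTcost τ (μ.map Tbar) (ν i) ≤ ENNReal.ofReal (c' i)
        + ENNReal.ofReal τ * Dpsi ((γ i).map Prod.snd) (ν i) := by
      intro i
      have hFm : Measurable (fun p : Ed d × Ed d => (Tbar p.1, p.2)) :=
        (hTbarm.comp measurable_fst).prodMk measurable_snd
      have hm1 : ((γ i).map (fun p : Ed d × Ed d => (Tbar p.1, p.2))).map Prod.fst
          = μ.map Tbar := by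
        rw [Measure.map_map measurable_fst hFm]
        have he : (Prod.fst ∘ fun p : Ed d × Ed d => (Tbar p.1, p.2))
            = Tbar ∘ Prod.fst := rfl
        rw [he, ← Measure.map_map hTbarm measurable_fst, hfst i]
      have hm2 : ((γ i).map (fun p : Ed d × Ed d => (Tbar p.1, p.2))).map Prod.snd
          = (γ i).map Prod.snd := by
        rw [Measure.map_map measurable_snd hFm]
        rfl
      have hle : UOTcost τ (μ.map Tbar) (ν i) ≤
          (∫⁻ p, ENNReal.ofReal (‖p.1 - p.2‖ ^ 2 / 2)
            ∂((γ i).map (fun p : Ed d × Ed d => (Tbar p.1, p.2))))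
          + ENNReal.ofReal τ
            * Dpsi (((γ i).map (fun p : Ed d × Ed d => (Tbar p.1, p.2))).map Prod.snd)
              (ν i) :=
        iInf₂_le ((γ i).map (fun p : Ed d × Ed d => (Tbar p.1, p.2))) hm1
      rw [hm2] at hle
      have hmeas : Measurable fun p : Ed d × Ed d =>
          ENNReal.ofReal (‖p.1 - p.2‖^2/2) :=
        ENNReal.measurable_ofReal.comp
          (((measurable_fst.sub measurable_snd).norm.pow_const 2).div_const 2)
      have hcosteq : (∫⁻ p, ENNReal.ofReal (‖p.1 - p.2‖ ^ 2 / 2)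
            ∂((γ i).map (fun p : Ed d × Ed d => (Tbar p.1, p.2))))
          = ∫⁻ p, ENNReal.ofReal (‖Tbar p.1 - p.2‖ ^ 2 / 2) ∂(γ i) := by
        rw [lintegral_map hmeas hFm]
      rw [hcosteq, hCi' i] at hle
      exact hle
    -- assembling the ENNReal inequality
    have hVμ : Vfun τ α ν μ = ∑ i, ENNReal.ofReal (α i) * (ENNReal.ofReal (c i)
        + ENNReal.ofReal τ * Dpsi ((γ i).map Prod.snd) (ν i)) := by
      rw [Vfun]
      exact Finset.sum_congr rfl fun i _ => by rw [← (hγ i).2, hCi i]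
    have hVmap : Vfun τ α ν (μ.map Tbar) ≤ ∑ i, ENNReal.ofReal (α i)
        * (ENNReal.ofReal (c' i)
          + ENNReal.ofReal τ * Dpsi ((γ i).map Prod.snd) (ν i)) := by
      rw [Vfun]
      exact Finset.sum_le_sum fun i _ => mul_le_mul_right (hub i) _
    have hofsum : ∀ (b : Fin N → ℝ), (∀ i, 0 ≤ b i) →
        ∑ i, ENNReal.ofReal (α i) * ENNReal.ofReal (b i)
          = ENNReal.ofReal (∑ i, α i * b i) := by
      intro b hb
      rw [ENNReal.ofReal_sum_of_nonneg (fun i _ => mul_nonneg (hα i) (hb i))]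
      exact Finset.sum_congr rfl fun i _ => (ENNReal.ofReal_mul (hα i)).symm
    have hEsum : (∑ i, ENNReal.ofReal (α i) * (ENNReal.ofReal (c' i)
          + ENNReal.ofReal τ * Dpsi ((γ i).map Prod.snd) (ν i))) + ENNReal.ofReal (I/2)
        = ∑ i, ENNReal.ofReal (α i) * (ENNReal.ofReal (c i)
          + ENNReal.ofReal τ * Dpsi ((γ i).map Prod.snd) (ν i)) := by
      simp only [mul_add]
      rw [Finset.sum_add_distrib, Finset.sum_add_distrib, hofsum c' hc'0, hofsum c hc0,
        add_right_comm, ← ENNReal.ofReal_add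
          (Finset.sum_nonneg fun i _ => mul_nonneg (hα i) (hc'0 i)) (by positivity),
        hkey]
    have hVmap2 : Vfun τ α ν (μ.map Tbar) + ENNReal.ofReal (I/2) ≤ Vfun τ α ν μ := by
      rw [hVμ, ← hEsum]
      exact add_le_add_left hVmap _
    have hfin : Vfun τ α ν μ ≠ ⊤ := by
      rw [Vfun, ENNReal.sum_ne_top]
      exact fun i _ => ENNReal.mul_ne_top ENNReal.ofReal_ne_top (hUne i)
    -- conclude
    rw [h] at hVmap2 hfin
    have h0 : ENNReal.ofReal (I/2) ≤ 0 := by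
      have key' : Vfun τ α ν (μ.map Tbar) + ENNReal.ofReal (I/2)
          ≤ Vfun τ α ν (μ.map Tbar) + 0 := by simpa using hVmap2
      exact ENNReal.le_of_add_le_add_left hfin key'
    have hI0' : I ≤ 0 := by
      have := ENNReal.ofReal_eq_zero.mp (le_antisymm h0 (zero_le))
      linarith
    have hIeq : I = 0 := le_antisymm hI0' hI0
    rw [hIdef] at hIeq
    have hzero := (integral_eq_zero_iff_of_nonneg (fun x => sq_nonneg ‖g x‖) hg2).mp hIeq
    filter_upwards [hzero] with x hx
    have hnx : ‖g x‖ ^ 2 = 0 := hx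
    have hgx : g x = 0 := by simpa [pow_eq_zero_iff] using hnx
    have : Tbar x - x = 0 := hgx
    exact sub_eq_zero.mp this
  · intro h
    have h2 : Tbar =ᵐ[μ] id := by filter_upwards [h] with x hx; simpa using hx
    have hmapeq : μ.map Tbar = μ := by rw [Measure.map_congr h2, Measure.map_id]
    rw [hmapeq]

end
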